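/- For every integer r ≥ 1 there exists a constant C > 0 such that for all positive integers d, z and n with d + r ≤ n, there exists an m × n binary (d, r; z]-disjunct matrix with m ≤ C·( r·d·ln(n) + z )^{r+1}. -/

import Mathlib

open Polynomial Finset

/-- evaluation of the polynomial with coefficients `c` at `x` -/
def pev {q k : ℕ} (c : Fin k → ZMod q) (x : ZMod q) : ZMod q :=
  ∑ i : Fin k, c i * x ^ (i : ℕ)

lemma agree_card_le (q k : ℕ) (hq : q.Prime) [NeZero q] (c c' : Fin k → ZMod q) (h : c ≠ c') :
    (Finset.univ.filter fun x : ZMod q => pev c x = pev c' x).card ≤ k := by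
  haveI : Fact q.Prime := ⟨hq⟩
  set P : Polynomial (ZMod q) := ∑ i : Fin k, Polynomial.C (c i - c' i) * Polynomial.X ^ (i : ℕ)
    with hP
  have hPeval : ∀ x : ZMod q, P.eval x = pev c x - pev c' x := by
    intro x
    simp [hP, Polynomial.eval_finset_sum, pev, sub_mul, Finset.sum_sub_distrib]
  have hP0 : P ≠ 0 := by
    obtain ⟨j, hj⟩ := Function.ne_iff.mp h
    intro hP0
    have hc : P.coeff (j : ℕ) = 0 := by rw [hP0]; simp
    rw [hP, Polynomial.finset_sum_coeff] at hc
    simp only [Polynomial.coeff_C_mul, Polynomial.coeff_X_pow] at hc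
    rw [Finset.sum_eq_single j (by
        intro b _ hb
        rw [if_neg (by simpa [Fin.val_injective.eq_iff] using hb.symm), mul_zero])
      (by simp)] at hc
    simp at hc
    exact hj (sub_eq_zero.mp hc)
  have hdeg : P.natDegree ≤ k := by
    apply Polynomial.natDegree_sum_le_of_forall_le
    intro i _
    refine le_trans (Polynomial.natDegree_C_mul_le _ _) ?_
    simpa using i.isLt.le
  have hsub : (Finset.univ.filter fun x : ZMod q => pev c x = pev c' x) ⊆ P.roots.toFinset := by
    intro x hx
    rw [Finset.mem_filter] at hx
    rw [Multiset.mem_toFinset, Polynomial.mem_roots hP0]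
    show P.IsRoot x
    rw [Polynomial.IsRoot, hPeval, hx.2, sub_self]
  calc (Finset.univ.filter fun x : ZMod q => pev c x = pev c' x).card
      ≤ P.roots.toFinset.card := Finset.card_le_card hsub
    _ ≤ Multiset.card P.roots := Multiset.toFinset_card_le _
    _ ≤ P.natDegree := Polynomial.card_roots' P
    _ ≤ k := hdeg

/-- An `m × n` binary matrix `M` is `(d, r; z]`-disjunct if for every pair of disjoint
sets `S1`, `S2` of column indices with `|S1| = d` and `|S2| = r`, there are at least `z`
rows in which every column indexed by `S2` has entry 1 and every column indexed by `S1`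
has entry 0. -/
def Disjunct (m n d r z : ℕ) (M : Fin m → Fin n → Bool) : Prop :=
  ∀ S1 S2 : Finset (Fin n), Disjoint S1 S2 → S1.card = d → S2.card = r →
    z ≤ (Finset.univ.filter fun i : Fin m =>
      (∀ j ∈ S2, M i j = true) ∧ ∀ j ∈ S1, M i j = false).card

/-- for every `r ≥ 1` there is a constant `C > 0` such that for all
positive integers `d, z, n` with `d + r ≤ n`, there exists an `m × n` binary
`(d, r; z]`-disjunct matrix with `m ≤ C·(r·d·ln(n) + z)^{r+1}`. -/
theorem nonrandom_disjunct_exists (r : ℕ) (hr : 1 ≤ r) :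
    ∃ C : ℝ, 0 < C ∧ ∀ d z n : ℕ, 0 < d → 0 < z → 0 < n → d + r ≤ n →
      ∃ m : ℕ, ∃ M : Fin m → Fin n → Bool, Disjunct m n d r z M ∧
        (m : ℝ) ≤ C * (r * d * Real.log n + z) ^ (r + 1) := by
  classical
  refine ⟨6 ^ (r + 1), by positivity, ?_⟩
  intro d z n hd hz hn hdn
  have hn2 : 2 ≤ n := by omega
  set k := Nat.clog 2 n with hkdef
  have hk1 : 1 ≤ k := Nat.clog_pos (by norm_num) hn2
  have hnk : n ≤ 2 ^ k := Nat.le_pow_clog (by norm_num) n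
  set N := d * r * k + z with hNdef
  have hN0 : N ≠ 0 := by positivity
  obtain ⟨q, hqp, hNq, hq2N⟩ := Nat.exists_prime_lt_and_le_two_mul N hN0
  haveI : Fact q.Prime := ⟨hqp⟩
  have hq2 : 2 ≤ q := hqp.two_le
  have hcard : n ≤ Fintype.card (Fin k → ZMod q) := by
    rw [Fintype.card_fun, ZMod.card, Fintype.card_fin]
    calc n ≤ 2 ^ k := hnk
      _ ≤ q ^ k := Nat.pow_le_pow_left hq2 k
  obtain ⟨emb⟩ : Nonempty (Fin n ↪ (Fin k → ZMod q)) :=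
    Function.Embedding.nonempty_of_card_le (by simpa using hcard)
  have hcardm : Fintype.card (ZMod q × (Fin r → ZMod q)) = q ^ (r + 1) := by
    rw [Fintype.card_prod, Fintype.card_fun, ZMod.card, Fintype.card_fin, pow_succ, mul_comm]
  set e : Fin (q ^ (r + 1)) ≃ (ZMod q × (Fin r → ZMod q)) :=
    (Fintype.equivFinOfCardEq hcardm).symm with he
  refine ⟨q ^ (r + 1),
    fun i j => decide (∃ t : Fin r, (e i).2 t = pev (emb j) (e i).1), ?_, ?_⟩
  · -- disjunctness
    intro S1 S2 hdisj h1 h2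
    set s2 := S2.orderIsoOfFin h2 with hs2
    set Bad : Finset (ZMod q) := Finset.univ.filter
      (fun x => ∃ a ∈ S1, ∃ b ∈ S2, pev (emb b) x = pev (emb a) x) with hBad
    have hBadcard : Bad.card ≤ d * r * k := by
      have hsub : Bad ⊆ S1.biUnion (fun a => S2.biUnion (fun b =>
          Finset.univ.filter fun x => pev (emb b) x = pev (emb a) x)) := by
        intro x hx
        simp only [hBad, Finset.mem_filter, Finset.mem_univ, true_and] at hx
        obtain ⟨a, ha, b, hb, hab⟩ := hx
        simp only [Finset.mem_biUnion]
        exact ⟨a, ha, b, hb, by simp [hab]⟩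
      refine le_trans (Finset.card_le_card hsub) ?_
      refine le_trans Finset.card_biUnion_le ?_
      have inner : ∀ a ∈ S1, (S2.biUnion (fun b =>
          Finset.univ.filter fun x => pev (emb b) x = pev (emb a) x)).card ≤ r * k := by
        intro a ha
        refine le_trans Finset.card_biUnion_le ?_
        have : ∀ b ∈ S2,
            (Finset.univ.filter fun x => pev (emb b) x = pev (emb a) x).card ≤ k := by
          intro b hb
          refine agree_card_le q k hqp _ _ ?_
          intro hEq
          have hba : b = a := emb.injective hEq
          exact (Finset.disjoint_left.mp hdisj ha) (hba ▸ hb)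
        calc _ ≤ ∑ _b ∈ S2, k := Finset.sum_le_sum this
          _ = r * k := by rw [Finset.sum_const, h2, smul_eq_mul]
      calc _ ≤ ∑ _a ∈ S1, (r * k) := Finset.sum_le_sum inner
        _ = d * (r * k) := by rw [Finset.sum_const, h1, smul_eq_mul]
        _ = d * r * k := by ring
    set Good : Finset (ZMod q) := Finset.univ \ Bad with hGooddef
    have hGood : z ≤ Good.card := by
      have hc : Good.card = q - Bad.card := by
        rw [hGooddef, Finset.card_sdiff_of_subset (Finset.subset_univ _), Finset.card_univ, ZMod.card]
      omega
    refine le_trans hGood ?_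
    refine Finset.card_le_card_of_injOn
      (fun x => e.symm (x, fun t => pev (emb (s2 t)) x)) ?_ ?_
    · intro x hx
      have hxB : x ∉ Bad := (Finset.mem_sdiff.mp hx).2
      simp only [Finset.mem_coe, Finset.mem_filter, Finset.mem_univ, true_and]
      constructor
      · intro j hj
        rw [decide_eq_true_iff]
        refine ⟨s2.symm ⟨j, hj⟩, ?_⟩
        simp only [Equiv.apply_symm_apply]
        congr 2
        exact congrArg Subtype.val (s2.apply_symm_apply ⟨j, hj⟩)
      · intro j hj
        rw [decide_eq_false_iff_not]
        simp only [Equiv.apply_symm_apply]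
        rintro ⟨t, ht⟩
        apply hxB
        rw [hBad, Finset.mem_filter]
        exact ⟨Finset.mem_univ _, j, hj, s2 t, (s2 t).2, ht⟩
    · intro x _ y _ hxy
      have := e.symm.injective hxy
      exact congrArg Prod.fst this
  · -- size bound
    have hL2 : (0.6931471803 : ℝ) < Real.log 2 := Real.log_two_gt_d9
    have hLn : Real.log 2 ≤ Real.log n :=
      Real.log_le_log (by norm_num) (by exact_mod_cast hn2)
    have hkR : (k : ℝ) ≤ 3 * Real.log n := by
      have h2k : (2 : ℕ) ^ (k - 1) < n := Nat.pow_pred_clog_lt_self (by norm_num) hn2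
      have h2kR : (2 : ℝ) ^ (k - 1) < (n : ℝ) := by exact_mod_cast h2k
      have hlog := Real.log_lt_log (by positivity) h2kR
      rw [Real.log_pow] at hlog
      have hk' : ((k - 1 : ℕ) : ℝ) = (k : ℝ) - 1 := by
        rw [Nat.cast_sub hk1]; norm_num
      rw [hk'] at hlog
      have hA : (0 : ℝ) < Real.log 2 := by linarith
      have h1 : ((k : ℝ) - 1) < Real.log n / Real.log 2 := by
        rw [lt_div_iff₀ hA]; linarith
      have h2 : (1 : ℝ) ≤ Real.log n / Real.log 2 := by
        rw [le_div_iff₀ hA]; linarith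
      have h3 : Real.log n / Real.log 2 ≤ 1.5 * Real.log n := by
        rw [div_le_iff₀ hA]
        nlinarith [hLn, hL2]
      linarith
    have hX0 : (0 : ℝ) ≤ (r : ℝ) * d * Real.log n + z := by
      have : (0:ℝ) ≤ Real.log n := by linarith
      positivity
    have hq6X : (q : ℝ) ≤ 6 * ((r : ℝ) * d * Real.log n + z) := by
      have hqR : (q : ℝ) ≤ 2 * N := by exact_mod_cast hq2N
      have hNR : (N : ℝ) = (d : ℝ) * r * k + z := by rw [hNdef]; push_cast; ring
      have hd1 : (1 : ℝ) ≤ d := by exact_mod_cast hd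
      have hz0 : (0 : ℝ) ≤ z := by positivity
      have hdr : (d : ℝ) * r * k ≤ (r : ℝ) * d * (3 * Real.log n) := by
        have h0 : (0 : ℝ) ≤ (d : ℝ) * r := by positivity
        nlinarith [hkR]
      nlinarith [hqR, hNR, hdr]
    calc ((q ^ (r + 1) : ℕ) : ℝ) = (q : ℝ) ^ (r + 1) := by push_cast; ring
      _ ≤ (6 * ((r : ℝ) * d * Real.log n + z)) ^ (r + 1) := by
          apply pow_le_pow_left₀ (by positivity) hq6X
      _ = 6 ^ (r + 1) * ((r : ℝ) * d * Real.log n + z) ^ (r + 1) := mul_pow _ _ _
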